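/- Let 𝔽₄ = GaloisField 2 2 and let S = 𝔽₄ + u𝔽₄ (u² = 0), realized as DualNumber (GaloisField 2 2). Let φ : S → 𝔽₄ × 𝔽₄ be the map φ(a + bu) = (b, a + b), and let Φ : Sⁿ → 𝔽₄^{2n} be φ applied coordinatewise. If C ⊆ Sⁿ is self-orthogonal, i.e. ∑ᵢ vᵢwᵢ = 0 for all v, w ∈ C, then the image Φ(C) ⊆ 𝔽₄^{2n} is self-orthogonal: ∑ over all 2n coordinates of the products of any two image vectors is 0 in 𝔽₄. -/
import Mathlib


/-- The Gray map `φ(a + bu) = (b, a + b)` on `𝔽₄ + u𝔽₄ = DualNumber 𝔽₄`. -/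
noncomputable def grayMapF4 (x : DualNumber (GaloisField 2 2)) : GaloisField 2 2 × GaloisField 2 2 :=
  (x.snd, x.fst + x.snd)

theorem stmt11 {n : ℕ}
    (Φ : (Fin n → DualNumber (GaloisField 2 2)) → (Fin n → GaloisField 2 2 × GaloisField 2 2))
    (hΦ : Φ = fun v i => grayMapF4 (v i))
    (C : Set (Fin n → DualNumber (GaloisField 2 2)))
    (hC : ∀ v ∈ C, ∀ w ∈ C, ∑ i, v i * w i = 0) :
    ∀ v' ∈ Φ '' C, ∀ w' ∈ Φ '' C,
      ∑ i, ((v' i).1 * (w' i).1 + (v' i).2 * (w' i).2) = 0 := by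
  subst hΦ
  rintro _ ⟨v, hv, rfl⟩ _ ⟨w, hw, rfl⟩
  have h := hC v hv w hw
  have h1 : ∑ i, ((v i).fst * (w i).fst) = 0 := by
    have := congrArg TrivSqZeroExt.fst h
    simpa [TrivSqZeroExt.fst_sum, TrivSqZeroExt.fst_mul] using this
  have h2 : ∑ i, ((v i).fst * (w i).snd + (v i).snd * (w i).fst) = 0 := by
    have := congrArg TrivSqZeroExt.snd h
    simpa [TrivSqZeroExt.snd_sum, TrivSqZeroExt.snd_mul, smul_eq_mul, mul_comm] using this
  have key : ∑ i, ((grayMapF4 (v i)).1 * (grayMapF4 (w i)).1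
        + (grayMapF4 (v i)).2 * (grayMapF4 (w i)).2)
      = ∑ i, ((v i).fst * (w i).fst)
        + ∑ i, ((v i).fst * (w i).snd + (v i).snd * (w i).fst) := by
    rw [← Finset.sum_add_distrib]
    apply Finset.sum_congr rfl
    intro i _
    have h2 : (2 : GaloisField 2 2) = 0 := by
      exact_mod_cast CharP.cast_eq_zero (GaloisField 2 2) 2
    simp only [grayMapF4]
    linear_combination (v i).snd * (w i).snd * h2
  simpa [h1, h2] using key
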